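/- For every integer i ≥ 1, the central binomial coefficient satisfies C(2i,i)/2^{2i} < 1/√(π·i). -/
import Mathlib

open Filter Topology

noncomputable def cbA (n : ℕ) : ℝ := ((2 * n).choose n : ℝ) / 4 ^ n

noncomputable def cbC (n : ℕ) : ℝ := n * cbA n ^ 2

lemma cbA_pos (n : ℕ) : 0 < cbA n := by
  have h : 0 < (2 * n).choose n := Nat.choose_pos (by omega)
  unfold cbA
  have : (0:ℝ) < ((2 * n).choose n : ℝ) := by exact_mod_cast h
  positivity

lemma cbA_succ (n : ℕ) : cbA (n + 1) = (2 * n + 1) / (2 * n + 2) * cbA n := by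
  have h := Nat.succ_mul_centralBinom_succ n
  simp only [Nat.centralBinom] at h
  have h' : ((n:ℝ) + 1) * ((2 * (n + 1)).choose (n + 1) : ℝ)
      = 2 * (2 * n + 1) * ((2 * n).choose n : ℝ) := by exact_mod_cast h
  unfold cbA
  have h4 : (4:ℝ) ^ (n+1) = 4 ^ n * 4 := by ring
  rw [h4]
  field_simp
  nlinarith [h', pow_pos (show (0:ℝ) < 4 by norm_num) n]

lemma cbC_lt_succ (n : ℕ) (hn : 1 ≤ n) : cbC n < cbC (n + 1) := by
  have ha := cbA_pos n
  unfold cbC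
  rw [cbA_succ n]
  have hn' : (1:ℝ) ≤ (n:ℝ) := by exact_mod_cast hn
  have h2 : (0:ℝ) < 2 * n + 2 := by positivity
  rw [mul_pow, div_pow, div_mul_eq_mul_div, ← mul_div_assoc, lt_div_iff₀ (by positivity)]
  push_cast
  have ha' : 0 < cbA n ^ 2 := by positivity
  nlinarith [mul_pos ha' (show (0:ℝ) < (n:ℝ) + 1 by positivity)]

lemma cbC_eq (n : ℕ) : cbC n = (1/2 * (1 - (2 * (n:ℝ) + 1)⁻¹)) * (Real.Wallis.W n)⁻¹ := by
  have hW := Real.Wallis.W_eq_factorial_ratio n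
  have hf : (0:ℝ) < (n.factorial : ℝ) := by exact_mod_cast n.factorial_pos
  have hf2 : (0:ℝ) < ((2*n).factorial : ℝ) := by exact_mod_cast (2*n).factorial_pos
  have hch : ((2 * n).choose n : ℝ) = ((2*n).factorial : ℝ) / ((n.factorial : ℝ) * (n.factorial : ℝ)) := by
    rw [eq_div_iff (by positivity)]
    have := Nat.choose_mul_factorial_mul_factorial (show n ≤ 2*n by omega)
    have h2 : 2 * n - n = n := by omega
    rw [h2] at this
    have hc := congrArg (Nat.cast : ℕ → ℝ) this
    push_cast at hc
    linear_combination hc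
  unfold cbC cbA
  rw [hW, hch]
  have h4 : (2:ℝ) ^ (4 * n) = (4 ^ n)^2 := by
    have h42 : (4:ℝ) = 2^2 := by norm_num
    rw [h42, ← pow_mul, ← pow_mul]
    congr 1
    ring
  have h1 : (0:ℝ) < 2 * (n:ℝ) + 1 := by positivity
  field_simp
  rw [h4]
  ring

lemma cbC_tendsto : Tendsto cbC atTop (𝓝 (1 / Real.pi)) := by
  have hW : Tendsto (fun n => (Real.Wallis.W n)⁻¹) atTop (𝓝 (Real.pi / 2)⁻¹) :=
    Real.Wallis.tendsto_W_nhds_pi_div_two.inv₀ (by positivity)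
  have h2 : Tendsto (fun n : ℕ => (2 * (n:ℝ) + 1)) atTop atTop := by
    apply tendsto_atTop_add_const_right
    exact tendsto_natCast_atTop_atTop.const_mul_atTop two_pos
  have h3 : Tendsto (fun n : ℕ => (2 * (n:ℝ) + 1)⁻¹) atTop (𝓝 0) :=
    h2.inv_tendsto_atTop
  have h4 : Tendsto (fun n : ℕ => 1/2 * (1 - (2 * (n:ℝ) + 1)⁻¹)) atTop (𝓝 (1/2)) := by
    have := ((tendsto_const_nhds (x := (1:ℝ))).sub h3).const_mul (1/2 : ℝ)
    simpa using this
  have := h4.mul hW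
  have heq : (1:ℝ)/2 * (Real.pi / 2)⁻¹ = 1 / Real.pi := by
    field_simp
  rw [heq] at this
  exact this.congr (fun n => (cbC_eq n).symm)

lemma cbC_lt (i : ℕ) (hi : 1 ≤ i) : cbC i < 1 / Real.pi := by
  have step := cbC_lt_succ i hi
  have hle : cbC (i + 1) ≤ 1 / Real.pi := by
    apply ge_of_tendsto cbC_tendsto
    filter_upwards [eventually_ge_atTop (i + 1)] with n hn
    induction n, hn using Nat.le_induction with
    | base => exact le_refl _
    | succ m hm ih => exact ih.trans (cbC_lt_succ m (by omega)).le
  exact lt_of_lt_of_le step hle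

/-- For every integer `i ≥ 1`, the central binomial coefficient satisfies
`C(2i,i)/2^(2i) < 1/√(π i)`. -/
theorem central_binom_lt (i : ℕ) (hi : 1 ≤ i) :
    ((2 * i).choose i : ℝ) / 2 ^ (2 * i) < 1 / Real.sqrt (Real.pi * i) := by
  have hpow : (2:ℝ) ^ (2 * i) = 4 ^ i := by
    rw [pow_mul]; norm_num
  rw [hpow]
  have hc := cbC_lt i hi
  have hi' : (0:ℝ) < (i:ℝ) := by exact_mod_cast hi
  have hpi : (0:ℝ) < Real.pi * i := by positivity
  have ha : cbA i ^ 2 < 1 / (Real.pi * i) := by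
    unfold cbC at hc
    rw [lt_div_iff₀ Real.pi_pos] at hc
    rw [lt_div_iff₀ hpi]
    nlinarith
  have := (Real.lt_sqrt (cbA_pos i).le).mpr ha
  calc ((2 * i).choose i : ℝ) / 4 ^ i = cbA i := rfl
    _ < Real.sqrt (1 / (Real.pi * i)) := this
    _ = 1 / Real.sqrt (Real.pi * i) := by
        rw [one_div, Real.sqrt_inv, one_div]
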